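/- Let 0 < α_min ≤ α_max < 1 and T > 0. Then there exists a constant C ∈ (0,∞), independent of τ and i, such that for every τ ∈ (0,1], every integer i ≥ 1 with (i+1)τ ≤ T, every α ∈ [α_min, α_max], and every σ ∈ [1/2, 1], the function a_i(α,σ;τ) := (τ^{−α}/Γ(2−α))·( ((i+σ+1)^{2−α} − 2(i+σ)^{2−α} + (i+σ−1)^{2−α})/(2−α) − ((i+σ+1)^{1−α} − 2(i+σ)^{1−α} + (i+σ−1)^{1−α})/2 ) satisfies |∂_α a_i(α,σ;τ)| + |∂_σ a_i(α,σ;τ)| ≤ C·(1 + |log((i+1)τ)|)·((i+1)τ)^{−α_max}. -/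

import Mathlib

/-- The i-th interior normalized weight `a_i(α,σ;τ)` of the second-order
approximation of the Caputo derivative of order `α`, with time step `τ` and
intermediate parameter `σ`. -/
noncomputable def ai (α σ τ : ℝ) (i : ℕ) : ℝ :=
  τ ^ (-α) / Real.Gamma (2 - α) *
    ((((i : ℝ) + σ + 1) ^ (2 - α) - 2 * ((i : ℝ) + σ) ^ (2 - α)
        + ((i : ℝ) + σ - 1) ^ (2 - α)) / (2 - α)
      - (((i : ℝ) + σ + 1) ^ (1 - α) - 2 * ((i : ℝ) + σ) ^ (1 - α)
        + ((i : ℝ) + σ - 1) ^ (1 - α)) / 2)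

open Real Set


/-- Second difference bound via two applications of MVT. -/
lemma sdiff_bound {f f' f'' : ℝ → ℝ} {c M : ℝ}
    (hd1 : ∀ v ∈ Icc (c-1) (c+1), HasDerivAt f (f' v) v)
    (hd2 : ∀ v ∈ Icc (c-1) (c+1), HasDerivAt f' (f'' v) v)
    (hM : ∀ v ∈ Icc (c-1) (c+1), |f'' v| ≤ M) :
    |f (c+1) - 2*f c + f (c-1)| ≤ 2*M := by
  have hIcc1 : Icc c (c+1) ⊆ Icc (c-1) (c+1) := Icc_subset_Icc (by linarith) le_rfl
  have hIcc2 : Icc (c-1) c ⊆ Icc (c-1) (c+1) := Icc_subset_Icc le_rfl (by linarith)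
  have hcont : ContinuousOn f (Icc (c-1) (c+1)) := fun v hv =>
    ((hd1 v hv).continuousAt).continuousWithinAt
  obtain ⟨c₁, hc₁, hc₁'⟩ := exists_hasDerivAt_eq_slope f f' (by linarith : c < c+1)
    (hcont.mono hIcc1) (fun v hv => hd1 v (hIcc1 (Ioo_subset_Icc_self hv)))
  obtain ⟨c₂, hc₂, hc₂'⟩ := exists_hasDerivAt_eq_slope f f' (by linarith : c-1 < c)
    (hcont.mono hIcc2) (fun v hv => hd1 v (hIcc2 (Ioo_subset_Icc_self hv)))
  have e1 : f' c₁ = f (c+1) - f c := by rw [hc₁']; field_simp; ring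
  have e2 : f' c₂ = f c - f (c-1) := by rw [hc₂']; field_simp; ring
  have hmem1 : c₁ ∈ Icc (c-1) (c+1) := hIcc1 (Ioo_subset_Icc_self hc₁)
  have hmem2 : c₂ ∈ Icc (c-1) (c+1) := hIcc2 (Ioo_subset_Icc_self hc₂)
  have key : ‖f' c₁ - f' c₂‖ ≤ M * ‖c₁ - c₂‖ :=
    Convex.norm_image_sub_le_of_norm_hasDerivWithin_le
      (fun v hv => (hd2 v hv).hasDerivWithinAt)
      (fun v hv => hM v hv) (convex_Icc _ _) hmem2 hmem1
  have hdist : ‖c₁ - c₂‖ ≤ 2 := by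
    rw [Real.norm_eq_abs, abs_le]
    constructor <;> [linarith [hmem1.1, hmem2.2]; linarith [hmem1.2, hmem2.1]]
  have hM0 : 0 ≤ M := le_trans (abs_nonneg _) (hM c ⟨by linarith, by linarith⟩)
  have : |f (c+1) - 2*f c + f (c-1)| = ‖f' c₁ - f' c₂‖ := by
    rw [Real.norm_eq_abs, e1, e2]; ring_nf
  rw [this]
  calc ‖f' c₁ - f' c₂‖ ≤ M * ‖c₁ - c₂‖ := key
    _ ≤ M * 2 := by nlinarith [norm_nonneg (c₁ - c₂)]
    _ = 2 * M := by ring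

noncomputable def GinvC : ℂ → ℂ := fun z => (Complex.Gamma (2 - z))⁻¹
noncomputable def dGinv (a : ℝ) : ℝ := (deriv GinvC (a:ℂ)).re

lemma diff_GinvC : Differentiable ℂ GinvC :=
  Complex.differentiable_one_div_Gamma.comp ((differentiable_const (2:ℂ)).sub differentiable_id)

lemma GinvC_ofReal (x : ℝ) : GinvC x = ((Real.Gamma (2 - x))⁻¹ : ℝ) := by
  unfold GinvC
  rw [show ((2:ℂ) - (x:ℂ)) = (((2 - x : ℝ)):ℂ) by push_cast; ring, Complex.Gamma_ofReal]
  push_cast; ring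

lemma hasDerivAt_Ginv (a : ℝ) :
    HasDerivAt (fun x : ℝ => (Real.Gamma (2 - x))⁻¹) (dGinv a) a := by
  have h1 : HasDerivAt GinvC (deriv GinvC a) (a:ℂ) := (diff_GinvC _).hasDerivAt
  have h2 := h1.real_of_complex
  have : (fun x : ℝ => (GinvC x).re) = fun x : ℝ => (Real.Gamma (2 - x))⁻¹ := by
    funext x; rw [GinvC_ofReal]; simp
  rwa [this] at h2

lemma cont_dGinv : Continuous dGinv := by
  have h1 : Continuous (fun z => fderiv ℂ GinvC z) := by
    rw [continuous_iff_continuousAt]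
    intro z
    exact ((diff_GinvC.analyticAt z).fderiv).continuousAt
  have h2 : Continuous (fun z => deriv GinvC z) := by
    have : (fun z => deriv GinvC z) = fun z => (fderiv ℂ GinvC z) 1 := by
      funext z; rw [fderiv_apply_one_eq_deriv]
    rw [this]
    exact (ContinuousLinearMap.apply ℂ ℂ (1:ℂ)).continuous.comp h1
  exact Complex.continuous_re.comp (h2.comp Complex.continuous_ofReal)

/-- α-derivative of the node function. -/
lemma hasDerivAt_node {τ v α : ℝ} (hτ : 0 < τ) (hv : 0 < v) (hα : α < 2) :
    HasDerivAt (fun a : ℝ => τ^(-a) * (v^(2-a)/(2-a) - v^(1-a)/2))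
      (-(Real.log v + Real.log τ) * (τ^(-α) * v^(2-α))/(2-α) + τ^(-α)*v^(2-α)/(2-α)^2
        + (Real.log v + Real.log τ) * (τ^(-α)*v^(1-α))/2) α := by
  have h2 : (2 - α) ≠ 0 := by linarith
  have A : HasDerivAt (fun a : ℝ => τ ^ (-a)) (-(Real.log τ) * τ^(-α)) α := by
    have := (hasDerivAt_const α τ).rpow (hasDerivAt_id α).neg (by simpa using hτ)
    refine this.congr_deriv ?_; simp only [Pi.neg_apply, id_eq]; ring
  have B2 : HasDerivAt (fun a : ℝ => v ^ (2-a)) (-(Real.log v) * v^(2-α)) α := by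
    have := (hasDerivAt_const α v).rpow ((hasDerivAt_id α).const_sub 2) (by simpa using hv)
    refine this.congr_deriv ?_; simp only [id_eq]; ring
  have B1 : HasDerivAt (fun a : ℝ => v ^ (1-a)) (-(Real.log v) * v^(1-α)) α := by
    have := (hasDerivAt_const α v).rpow ((hasDerivAt_id α).const_sub 1) (by simpa using hv)
    refine this.congr_deriv ?_; simp only [id_eq]; ring
  have Q : HasDerivAt (fun a : ℝ => (2:ℝ) - a) (-1) α := (hasDerivAt_id α).const_sub 2
  have C2 := B2.div Q h2
  have D := C2.sub (B1.div_const 2)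
  have E := A.mul D
  refine E.congr_deriv ?_
  simp only [Pi.sub_apply, Pi.div_apply]
  field_simp
  ring

section vderivs
variable {τ v α : ℝ}

lemma e_exp1 (hv : 0 < v) : v ^ (1-α) = v^(-α) * v := by
  rw [show (1-α:ℝ) = -α + 1 by ring, Real.rpow_add hv, Real.rpow_one]

lemma e_exp2 (hv : 0 < v) : v ^ (2-α) = v^(-α) * (v*v) := by
  rw [show (2-α:ℝ) = -α + 1 + 1 by ring, Real.rpow_add hv, Real.rpow_add hv, Real.rpow_one]
  ring

lemma e_expm1 (hv : 0 < v) : v ^ (-1-α) = v^(-α) * v⁻¹ := by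
  rw [show (-1-α:ℝ) = -α + (-1) by ring, Real.rpow_add hv, Real.rpow_neg_one]

lemma e_expm2 (hv : 0 < v) : v ^ (-2-α) = v^(-α) * (v⁻¹ * v⁻¹) := by
  rw [show (-2-α:ℝ) = -α + (-1) + (-1) by ring, Real.rpow_add hv, Real.rpow_add hv,
    Real.rpow_neg_one]
  ring

/-- v-derivative of F. -/
lemma hasDerivAt_F (hv : 0 < v) (hα : α < 2) :
    HasDerivAt (fun v : ℝ => τ^(-α) * (v^(2-α)/(2-α) - v^(1-α)/2))
      (τ^(-α) * (v^(1-α) - (1-α) * v^(-α)/2)) v := by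
  have h2 : (2 - α) ≠ 0 := by linarith
  have B2 := (Real.hasDerivAt_rpow_const (p := 2-α) (Or.inl hv.ne')).div_const (2-α)
  have B1 := (Real.hasDerivAt_rpow_const (p := 1-α) (Or.inl hv.ne')).div_const 2
  have D := (B2.sub B1).const_mul (τ^(-α))
  refine D.congr_deriv ?_
  rw [show (2-α-1:ℝ) = 1-α by ring, show (1-α-1:ℝ) = -α by ring]
  field_simp

/-- v-derivative of F'. -/
lemma hasDerivAt_F' (hv : 0 < v) :
    HasDerivAt (fun v : ℝ => τ^(-α) * (v^(1-α) - (1-α) * v^(-α)/2))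
      (τ^(-α) * ((1-α)*v^(-α) + α*(1-α)*v^(-1-α)/2)) v := by
  have B1 := Real.hasDerivAt_rpow_const (p := 1-α) (Or.inl hv.ne')
  have B0 := (Real.hasDerivAt_rpow_const (p := -α) (Or.inl hv.ne')).const_mul (1-α)
  have D := (B1.sub (B0.div_const 2)).const_mul (τ^(-α))
  refine D.congr_deriv ?_
  rw [show (1-α-1:ℝ) = -α by ring, show (-α-1:ℝ) = -1-α by ring]; ring

/-- v-derivative of F''. -/
lemma hasDerivAt_F'' (hv : 0 < v) :
    HasDerivAt (fun v : ℝ => τ^(-α) * ((1-α)*v^(-α) + α*(1-α)*v^(-1-α)/2))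
      (τ^(-α) * ((1-α)*(-α)*v^(-1-α) + α*(1-α)*(-1-α)*v^(-2-α)/2)) v := by
  have B0 := (Real.hasDerivAt_rpow_const (p := -α) (Or.inl hv.ne')).const_mul (1-α)
  have B1 := (Real.hasDerivAt_rpow_const (p := -1-α) (Or.inl hv.ne')).const_mul (α*(1-α))
  have D := (B0.add (B1.div_const 2)).const_mul (τ^(-α))
  refine D.congr_deriv ?_
  rw [show (-α-1:ℝ) = -1-α by ring, show (-1-α-1:ℝ) = -2-α by ring]; ring

/-- v-derivative of G. -/
lemma hasDerivAt_G (hτ : 0 < τ) (hv : 0 < v) (hα : α < 2) :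
    HasDerivAt (fun v : ℝ => -(Real.log v + Real.log τ) * (τ^(-α) * v^(2-α))/(2-α)
        + τ^(-α)*v^(2-α)/(2-α)^2 + (Real.log v + Real.log τ) * (τ^(-α)*v^(1-α))/2)
      (τ^(-α) * (-(Real.log v + Real.log τ)*v^(1-α) + v^(-α)/2
        + (1-α)*(Real.log v + Real.log τ)*v^(-α)/2)) v := by
  have h2 : (2 - α) ≠ 0 := by linarith
  have hL : HasDerivAt (fun v : ℝ => Real.log v + Real.log τ) v⁻¹ v :=
    (Real.hasDerivAt_log hv.ne').add_const _
  have B2 := Real.hasDerivAt_rpow_const (p := 2-α) (Or.inl hv.ne')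
  have B1 := Real.hasDerivAt_rpow_const (p := 1-α) (Or.inl hv.ne')
  have T1 := ((hL.neg.mul (B2.const_mul (τ^(-α)))).div_const (2-α))
  have T2 := (B2.const_mul (τ^(-α))).div_const ((2-α)^2)
  have T3 := (hL.mul (B1.const_mul (τ^(-α)))).div_const 2
  have D := (T1.add T2).add T3
  refine D.congr_deriv ?_
  rw [show (2-α-1:ℝ) = 1-α by ring, show (1-α-1:ℝ) = -α by ring,
    e_exp2 hv, e_exp1 hv]
  simp only [Pi.neg_apply]
  field_simp
  ring

/-- v-derivative of G'. -/
lemma hasDerivAt_G' (hτ : 0 < τ) (hv : 0 < v) :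
    HasDerivAt (fun v : ℝ => τ^(-α) * (-(Real.log v + Real.log τ)*v^(1-α) + v^(-α)/2
        + (1-α)*(Real.log v + Real.log τ)*v^(-α)/2))
      (τ^(-α) * (-(v^(-α) + (1-α)*(Real.log v + Real.log τ)*v^(-α)) + (-α)*v^(-1-α)/2
        + (1-α)*(v^(-1-α) + (-α)*(Real.log v + Real.log τ)*v^(-1-α))/2)) v := by
  have hL : HasDerivAt (fun v : ℝ => Real.log v + Real.log τ) v⁻¹ v :=
    (Real.hasDerivAt_log hv.ne').add_const _
  have B1 := Real.hasDerivAt_rpow_const (p := 1-α) (Or.inl hv.ne')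
  have B0 := Real.hasDerivAt_rpow_const (p := -α) (Or.inl hv.ne')
  have T1 := (hL.neg.mul B1)
  have T2 := B0.div_const 2
  have T3 := ((hL.mul B0).const_mul (1-α)).div_const 2
  have D := (((T1.add T2).add T3).const_mul (τ^(-α)))
  convert D using 1
  · rfl
  · rfl
  · funext y; simp only [Pi.add_apply, Pi.mul_apply, Pi.neg_apply]; ring
  · rw [show (1-α-1:ℝ) = -α by ring, show (-α-1:ℝ) = -1-α by ring,
      e_exp1 hv, e_expm1 hv]
    simp only [Pi.neg_apply]
    field_simp
    ring

end vderivs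

lemma aux1 {t W u α : ℝ} (ht : 0 < t) (htW : t ≤ W) (hu : 0 < u) (hu2 : u ≤ 2)
    (hα0 : 0 < α) (hα1 : α < 1) :
    |(1-α)*t + α*(1-α)*(t*u)/2| ≤ 2*W := by
  have h1 : t*u ≤ t*2 := mul_le_mul_of_nonneg_left hu2 ht.le
  have h2 : 0 < t*u := mul_pos ht hu
  have hq : α*(1-α) ≤ 1 := by nlinarith
  have hq0 : 0 < α*(1-α) := by nlinarith
  rw [abs_of_nonneg (by nlinarith [mul_pos hq0 h2])]
  nlinarith [mul_le_mul_of_nonneg_right hq h2.le,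
    mul_le_mul_of_nonneg_right (show (1-α) ≤ 1 by linarith) ht.le]

lemma aux2 {t W u α : ℝ} (ht : 0 < t) (htW : t ≤ W) (hu : 0 < u) (hu2 : u ≤ 2)
    (hα0 : 0 < α) (hα1 : α < 1) :
    |(1-α)*(-α)*(t*u) + α*(1-α)*(-1-α)*(t*(u*u))/2| ≤ 2*W := by
  have hW0 : 0 < W := lt_of_lt_of_le ht htW
  have h1 : t*u ≤ t*2 := mul_le_mul_of_nonneg_left hu2 ht.le
  have h2 : 0 < t*u := mul_pos ht hu
  have huu : u*u ≤ 4 := by nlinarith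
  have h3 : t*(u*u) ≤ t*4 := mul_le_mul_of_nonneg_left huu ht.le
  have h4 : 0 < t*(u*u) := by positivity
  have hq : α*(1-α) ≤ 1/4 := by nlinarith [sq_nonneg (2*α-1)]
  have hq0 : 0 < α*(1-α) := by nlinarith
  have hB : α*(1-α)*(1+α) ≤ 1/2 := by
    nlinarith [mul_le_mul_of_nonneg_right hq (show (0:ℝ) ≤ 1+α by linarith)]
  have hB0 : 0 < α*(1-α)*(1+α) := by positivity
  rw [abs_le]
  constructor
  · nlinarith [mul_le_mul_of_nonneg_right hq h2.le,
      mul_le_mul_of_nonneg_right hB h4.le]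
  · nlinarith [mul_pos hq0 h2, mul_pos hB0 h4]

lemma aux3 {t W u α L Λ : ℝ} (ht : 0 < t) (htW : t ≤ W) (hu : 0 < u) (hu2 : u ≤ 2)
    (hα0 : 0 < α) (hα1 : α < 1) (hL : |L| ≤ Λ) :
    |(-(t + (1-α)*L*t) + (-α)*(t*u)/2 + (1-α)*(t*u + (-α)*L*(t*u))/2)| ≤ (3+2*Λ)*W := by
  have hW0 : 0 < W := lt_of_lt_of_le ht htW
  have hΛ0 : 0 ≤ Λ := le_trans (abs_nonneg _) hL
  have hαn : (0:ℝ) ≤ 1-α := by linarith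
  have h1 : t*u ≤ t*2 := mul_le_mul_of_nonneg_left hu2 ht.le
  have h2 : 0 < t*u := mul_pos ht hu
  have hLt : abs L * t ≤ Λ*t := mul_le_mul_of_nonneg_right hL ht.le
  have hLtu : abs L * (t*u) ≤ Λ*(t*u) := mul_le_mul_of_nonneg_right hL h2.le
  have hΛtW : Λ*t ≤ Λ*W := mul_le_mul_of_nonneg_left htW hΛ0
  have hΛtu : Λ*(t*u) ≤ Λ*(t*2) := mul_le_mul_of_nonneg_left h1 hΛ0
  have hΛt0 : 0 ≤ Λ*t := mul_nonneg hΛ0 ht.le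
  have ha : |(-(t + (1-α)*L*t))| ≤ (1+Λ)*W := by
    rw [abs_neg]
    calc |t + (1-α)*L*t| ≤ |t| + |(1-α)*L*t| := abs_add_le _ _
      _ = t + (1-α)*(abs L * t) := by
          rw [abs_of_pos ht, abs_mul, abs_mul, abs_of_nonneg hαn, abs_of_pos ht, mul_assoc]
      _ ≤ (1+Λ)*W := by nlinarith [mul_nonneg hα0.le (mul_nonneg (abs_nonneg L) ht.le),
          mul_le_mul_of_nonneg_left hLt hαn]
  have hb : |(-α)*(t*u)/2| ≤ W := by
    rw [abs_of_nonpos (by nlinarith)]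
    nlinarith
  have hc : |(1-α)*(t*u + (-α)*L*(t*u))/2| ≤ (1+Λ)*W := by
    have hinner : |t*u + (-α)*L*(t*u)| ≤ t*u + α*(abs L * (t*u)) := by
      calc |t*u + (-α)*L*(t*u)| ≤ |t*u| + |(-α)*L*(t*u)| := abs_add_le _ _
        _ = t*u + α*(abs L * (t*u)) := by
            rw [abs_of_pos h2, abs_mul, abs_mul, abs_neg, abs_of_pos hα0, abs_of_pos h2, mul_assoc]
    calc |(1-α)*(t*u + (-α)*L*(t*u))/2| = (1-α)*|t*u + (-α)*L*(t*u)|/2 := by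
          rw [abs_div, abs_mul, abs_of_nonneg hαn]; norm_num
      _ ≤ (1+Λ)*W := by
          nlinarith [mul_le_mul_of_nonneg_left hinner hαn,
            mul_le_mul_of_nonneg_left hLtu hα0.le,
            mul_nonneg hα0.le (mul_nonneg (abs_nonneg L) h2.le),
            mul_le_mul_of_nonneg_left h1 hαn,
            mul_le_mul_of_nonneg_left hΛtu hα0.le,
            mul_le_mul_of_nonneg_left hΛtW hα0.le,
            mul_nonneg (mul_nonneg hα0.le hΛ0) ht.le,
            mul_le_mul_of_nonneg_left h1 hα0.le, abs_nonneg (t*u + (-α)*L*(t*u))]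
  calc |(-(t + (1-α)*L*t) + (-α)*(t*u)/2 + (1-α)*(t*u + (-α)*L*(t*u))/2)|
      ≤ |(-(t + (1-α)*L*t)) + (-α)*(t*u)/2| + |(1-α)*(t*u + (-α)*L*(t*u))/2| := abs_add_le _ _
    _ ≤ |(-(t + (1-α)*L*t))| + |(-α)*(t*u)/2| + |(1-α)*(t*u + (-α)*L*(t*u))/2| := by
        nlinarith [abs_add_le (-(t + (1-α)*L*t)) ((-α)*(t*u)/2)]
    _ ≤ (3+2*Λ)*W := by linarith


lemma e_expm1' {v α : ℝ} (hv : 0 < v) : v ^ (-1-α) = v^(-α) * v⁻¹ := by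
  rw [show (-1-α:ℝ) = -α + (-1) by ring, Real.rpow_add hv, Real.rpow_neg_one]

lemma e_expm2' {v α : ℝ} (hv : 0 < v) : v ^ (-2-α) = v^(-α) * (v⁻¹ * v⁻¹) := by
  rw [show (-2-α:ℝ) = -α + (-1) + (-1) by ring, Real.rpow_add hv, Real.rpow_add hv,
    Real.rpow_neg_one]
  ring

section bounds
variable {τ w v α : ℝ}

lemma vfacts (hw : 1/2 ≤ w) (hv : w ≤ v) (hα0 : 0 < α) :
    0 < v ∧ v^(-α) ≤ w^(-α) ∧ v⁻¹ ≤ 2 ∧ 0 < v⁻¹ ∧ 0 < v^(-α) := by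
  have hv0 : 0 < v := by linarith
  refine ⟨hv0, Real.rpow_le_rpow_of_nonpos (by linarith) hv (by linarith), ?_, by positivity,
    by positivity⟩
  have h := inv_anti₀ (by norm_num : (0:ℝ) < 1/2) (le_trans hw hv)
  simpa using h

lemma bound_F'' (hτ : 0 < τ) (hw : 1/2 ≤ w) (hv : w ≤ v) (hα0 : 0 < α) (hα1 : α < 1) :
    |τ^(-α) * ((1-α)*v^(-α) + α*(1-α)*v^(-1-α)/2)| ≤ 2 * (τ^(-α) * w^(-α)) := by
  obtain ⟨hv0, hvw, hinv, hinv0, ht0⟩ := vfacts hw hv hα0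
  have htp : (0:ℝ) < τ^(-α) := by positivity
  rw [e_expm1' hv0, abs_mul, abs_of_pos htp]
  calc τ^(-α) * |(1-α)*v^(-α) + α*(1-α)*(v^(-α)*v⁻¹)/2|
      ≤ τ^(-α) * (2*w^(-α)) :=
        mul_le_mul_of_nonneg_left (aux1 ht0 hvw hinv0 hinv hα0 hα1) htp.le
    _ = 2 * (τ^(-α) * w^(-α)) := by ring

lemma bound_F''' (hτ : 0 < τ) (hw : 1/2 ≤ w) (hv : w ≤ v) (hα0 : 0 < α) (hα1 : α < 1) :
    |τ^(-α) * ((1-α)*(-α)*v^(-1-α) + α*(1-α)*(-1-α)*v^(-2-α)/2)| ≤ 2 * (τ^(-α) * w^(-α)) := by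
  obtain ⟨hv0, hvw, hinv, hinv0, ht0⟩ := vfacts hw hv hα0
  have htp : (0:ℝ) < τ^(-α) := by positivity
  rw [e_expm1' hv0, e_expm2' hv0, abs_mul, abs_of_pos htp]
  calc τ^(-α) * |(1-α)*(-α)*(v^(-α)*v⁻¹) + α*(1-α)*(-1-α)*(v^(-α)*(v⁻¹*v⁻¹))/2|
      ≤ τ^(-α) * (2*w^(-α)) :=
        mul_le_mul_of_nonneg_left (aux2 ht0 hvw hinv0 hinv hα0 hα1) htp.le
    _ = 2 * (τ^(-α) * w^(-α)) := by ring

lemma bound_G'' {Λ : ℝ} (hτ : 0 < τ) (hw : 1/2 ≤ w) (hv : w ≤ v) (hα0 : 0 < α) (hα1 : α < 1)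
    (hL : |Real.log v + Real.log τ| ≤ Λ) :
    |τ^(-α) * (-(v^(-α) + (1-α)*(Real.log v + Real.log τ)*v^(-α)) + (-α)*v^(-1-α)/2
      + (1-α)*(v^(-1-α) + (-α)*(Real.log v + Real.log τ)*v^(-1-α))/2)|
      ≤ (3 + 2*Λ) * (τ^(-α) * w^(-α)) := by
  obtain ⟨hv0, hvw, hinv, hinv0, ht0⟩ := vfacts hw hv hα0
  have htp : (0:ℝ) < τ^(-α) := by positivity
  rw [e_expm1' hv0, abs_mul, abs_of_pos htp]
  have h3 := aux3 (u := v⁻¹) (L := Real.log v + Real.log τ) ht0 hvw hinv0 hinv hα0 hα1 hL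
  calc τ^(-α) * |(-(v^(-α) + (1-α)*(Real.log v + Real.log τ)*v^(-α))
        + (-α)*(v^(-α)*v⁻¹)/2 + (1-α)*(v^(-α)*v⁻¹
        + (-α)*(Real.log v + Real.log τ)*(v^(-α)*v⁻¹))/2)|
      ≤ τ^(-α) * ((3+2*Λ)*w^(-α)) := by
        exact mul_le_mul_of_nonneg_left h3 htp.le
    _ = (3 + 2*Λ) * (τ^(-α) * w^(-α)) := by ring

end bounds

lemma log_close {x y : ℝ} (hx : 0 < x) (h1 : x/4 ≤ y) (h2 : y ≤ 2*x) :
    |Real.log y| ≤ |Real.log x| + 3 := by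
  have hy : 0 < y := lt_of_lt_of_le (by positivity) h1
  have l2 : Real.log 2 ≤ 1 := by
    nlinarith [Real.log_le_sub_one_of_pos (by norm_num : (0:ℝ) < 2)]
  have l4 : Real.log 4 ≤ 3 := by
    nlinarith [Real.log_le_sub_one_of_pos (by norm_num : (0:ℝ) < 4)]
  have hub : Real.log y ≤ Real.log x + 3 := by
    have := Real.log_le_log (by positivity : (0:ℝ) < y) h2
    rw [Real.log_mul (by norm_num) hx.ne'] at this
    linarith
  have hlb : Real.log x - 3 ≤ Real.log y := by
    have := Real.log_le_log (by positivity : (0:ℝ) < x/4) h1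
    rw [Real.log_div hx.ne' (by norm_num)] at this
    linarith
  rw [abs_le]
  constructor
  · have := neg_abs_le (Real.log x); linarith
  · have := le_abs_self (Real.log x); linarith

noncomputable def Fnode (τ v a : ℝ) : ℝ := τ^(-a) * (v^(2-a)/(2-a) - v^(1-a)/2)

noncomputable def Gnode (τ v α : ℝ) : ℝ :=
  -(Real.log v + Real.log τ) * (τ^(-α) * v^(2-α))/(2-α) + τ^(-α)*v^(2-α)/(2-α)^2
    + (Real.log v + Real.log τ) * (τ^(-α)*v^(1-α))/2

noncomputable def F1 (τ α v : ℝ) : ℝ := τ^(-α) * (v^(1-α) - (1-α) * v^(-α)/2)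

noncomputable def F2 (τ α v : ℝ) : ℝ := τ^(-α) * ((1-α)*v^(-α) + α*(1-α)*v^(-1-α)/2)

noncomputable def F3 (τ α v : ℝ) : ℝ :=
  τ^(-α) * ((1-α)*(-α)*v^(-1-α) + α*(1-α)*(-1-α)*v^(-2-α)/2)

noncomputable def G1 (τ α v : ℝ) : ℝ :=
  τ^(-α) * (-(Real.log v + Real.log τ)*v^(1-α) + v^(-α)/2
    + (1-α)*(Real.log v + Real.log τ)*v^(-α)/2)

noncomputable def G2 (τ α v : ℝ) : ℝ :=
  τ^(-α) * (-(v^(-α) + (1-α)*(Real.log v + Real.log τ)*v^(-α)) + (-α)*v^(-1-α)/2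
    + (1-α)*(v^(-1-α) + (-α)*(Real.log v + Real.log τ)*v^(-1-α))/2)

section wrappers
variable {τ v w α : ℝ}

lemma hasDerivAt_Fnode_a (hτ : 0 < τ) (hv : 0 < v) (hα : α < 2) :
    HasDerivAt (fun a => Fnode τ v a) (Gnode τ v α) α := hasDerivAt_node hτ hv hα

lemma hasDerivAt_Fnode_v (hv : 0 < v) (hα : α < 2) :
    HasDerivAt (fun v => Fnode τ v α) (F1 τ α v) v := hasDerivAt_F hv hα

lemma hasDerivAt_F1_v (hv : 0 < v) :
    HasDerivAt (fun v => F1 τ α v) (F2 τ α v) v := hasDerivAt_F' hv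

lemma hasDerivAt_F2_v (hv : 0 < v) :
    HasDerivAt (fun v => F2 τ α v) (F3 τ α v) v := hasDerivAt_F'' hv

lemma hasDerivAt_Gnode_v (hτ : 0 < τ) (hv : 0 < v) (hα : α < 2) :
    HasDerivAt (fun v => Gnode τ v α) (G1 τ α v) v := hasDerivAt_G hτ hv hα

lemma hasDerivAt_G1_v (hτ : 0 < τ) (hv : 0 < v) :
    HasDerivAt (fun v => G1 τ α v) (G2 τ α v) v := hasDerivAt_G' hτ hv

lemma bound_F2 (hτ : 0 < τ) (hw : 1/2 ≤ w) (hv : w ≤ v) (hα0 : 0 < α) (hα1 : α < 1) :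
    |F2 τ α v| ≤ 2 * (τ^(-α) * w^(-α)) := bound_F'' hτ hw hv hα0 hα1

lemma bound_F3 (hτ : 0 < τ) (hw : 1/2 ≤ w) (hv : w ≤ v) (hα0 : 0 < α) (hα1 : α < 1) :
    |F3 τ α v| ≤ 2 * (τ^(-α) * w^(-α)) := bound_F''' hτ hw hv hα0 hα1

lemma bound_G2 {Λ : ℝ} (hτ : 0 < τ) (hw : 1/2 ≤ w) (hv : w ≤ v) (hα0 : 0 < α) (hα1 : α < 1)
    (hL : |Real.log v + Real.log τ| ≤ Λ) :
    |G2 τ α v| ≤ (3 + 2*Λ) * (τ^(-α) * w^(-α)) := bound_G'' hτ hw hv hα0 hα1 hL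

end wrappers

set_option maxHeartbeats 1000000 in
/-- the partial derivatives of `a_i` with respect to α and σ are
bounded by C·(1 + |log((i+1)τ)|)·((i+1)τ)^{−α_max}, uniformly in
τ ∈ (0,1], i ≥ 1 with (i+1)τ ≤ T, α ∈ [α_min,α_max], σ ∈ [1/2,1]. -/
theorem stmt_9 (αmin αmax T : ℝ)
    (h1 : 0 < αmin) (h2 : αmin ≤ αmax) (h3 : αmax < 1) (hT : 0 < T) :
    ∃ C > (0 : ℝ), ∀ τ ∈ Set.Ioc (0 : ℝ) 1, ∀ i : ℕ, 1 ≤ i →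
      ((i : ℝ) + 1) * τ ≤ T → ∀ α ∈ Set.Icc αmin αmax, ∀ σ ∈ Set.Icc (1/2 : ℝ) 1,
        |deriv (fun a => ai a σ τ i) α| + |deriv (fun s => ai α s τ i) σ| ≤
          C * (1 + |Real.log (((i : ℝ) + 1) * τ)|) *
            (((i : ℝ) + 1) * τ) ^ (-αmax) := by
  have hGcont : Continuous (fun a : ℝ => (Real.Gamma (2-a))⁻¹) :=
    continuous_iff_continuousAt.2 fun a => (hasDerivAt_Ginv a).continuousAt
  obtain ⟨B0, hB0⟩ := (isCompact_Icc (a := αmin) (b := αmax)).exists_bound_of_continuousOn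
    (f := fun a => |(Real.Gamma (2-a))⁻¹| + |dGinv a|)
    ((hGcont.abs.add cont_dGinv.abs).continuousOn)
  set B := max 1 B0 with hBdef
  have hB1 : (1:ℝ) ≤ B := le_max_left _ _
  have hBpos : (0:ℝ) < B := by linarith
  have hGB : ∀ a ∈ Icc αmin αmax, (Real.Gamma (2-a))⁻¹ ≤ B ∧ |dGinv a| ≤ B := by
    intro a ha
    have h := hB0 a ha
    rw [Real.norm_eq_abs,
      abs_of_nonneg (add_nonneg (abs_nonneg _) (abs_nonneg _))] at h
    have h1' : |(Real.Gamma (2-a))⁻¹| ≤ B0 := by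
      have := abs_nonneg (dGinv a); linarith
    have h2' : |dGinv a| ≤ B0 := by
      have := abs_nonneg ((Real.Gamma (2-a))⁻¹); linarith
    exact ⟨le_trans (le_trans (le_abs_self _) h1') (le_max_right _ _),
      le_trans h2' (le_max_right _ _)⟩
  refine ⟨104 * B * max 1 T, by positivity, ?_⟩
  intro τ hτ i hi hiT α hα σ hσ
  obtain ⟨hτ0, hτ1⟩ := hτ
  have hαm : αmin ≤ α := hα.1
  have hαM : α ≤ αmax := hα.2
  have hσ1 : 1/2 ≤ σ := hσ.1
  have hσ2 : σ ≤ 1 := hσ.2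
  have hi1 : (1:ℝ) ≤ (i:ℝ) := by exact_mod_cast hi
  have hαpos : 0 < α := lt_of_lt_of_le h1 hαm
  have hαlt1 : α < 1 := lt_of_le_of_lt hαM h3
  have hαlt2 : α < 2 := by linarith
  set x := ((i:ℝ) + 1) * τ with hxdef
  have hx0 : 0 < x := by rw [hxdef]; positivity
  have hw12 : (1/2 : ℝ) ≤ (i:ℝ) + σ - 1 := by linarith
  have hsm : (0:ℝ) < (i:ℝ) + σ - 1 := by linarith
  have hs0 : (0:ℝ) < (i:ℝ) + σ := by linarith
  have hsp : (0:ℝ) < (i:ℝ) + σ + 1 := by linarith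
  have hΛ : ∀ v ∈ Icc ((i:ℝ)+σ-1) ((i:ℝ)+σ+1),
      |Real.log v + Real.log τ| ≤ |Real.log x| + 3 := by
    intro v hv
    have hv0 : 0 < v := lt_of_lt_of_le hsm hv.1
    rw [← Real.log_mul hv0.ne' hτ0.ne']
    apply log_close hx0
    · have h4 : ((i:ℝ)+1)/4 ≤ v := by
        have := hv.1; linarith
      calc x/4 = ((i:ℝ)+1)/4 * τ := by rw [hxdef]; ring
        _ ≤ v * τ := mul_le_mul_of_nonneg_right h4 hτ0.le
    · have h4 : v ≤ 2*((i:ℝ)+1) := by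
        have := hv.2; linarith
      calc v * τ ≤ 2*((i:ℝ)+1) * τ := mul_le_mul_of_nonneg_right h4 hτ0.le
        _ = 2*x := by rw [hxdef]; ring
  set K := τ^(-α) * ((i:ℝ)+σ-1)^(-α) with hKdef
  have hK0 : 0 < K := by
    rw [hKdef]; positivity
  have hKb : K ≤ 4 * (max 1 T * x^(-αmax)) := by
    have e1 : K = (((i:ℝ)+σ-1) * τ)^(-α) := by
      rw [hKdef, Real.mul_rpow (by linarith : (0:ℝ) ≤ (i:ℝ)+σ-1) hτ0.le]; ring
    have e2 : x/4 ≤ ((i:ℝ)+σ-1) * τ := by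
      have h4 : ((i:ℝ)+1)/4 ≤ (i:ℝ)+σ-1 := by linarith
      calc x/4 = ((i:ℝ)+1)/4 * τ := by rw [hxdef]; ring
        _ ≤ ((i:ℝ)+σ-1) * τ := mul_le_mul_of_nonneg_right h4 hτ0.le
    have e3 : K ≤ (x/4)^(-α) := by
      rw [e1]
      exact Real.rpow_le_rpow_of_nonpos (by positivity) e2 (by linarith)
    have e4 : (x/4 : ℝ)^(-α) = x^(-α) * 4^α := by
      rw [Real.div_rpow hx0.le (by norm_num : (0:ℝ) ≤ 4),
        Real.rpow_neg (by norm_num : (0:ℝ) ≤ 4)]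
      field_simp
    have e5 : (4:ℝ)^α ≤ 4 := by
      calc (4:ℝ)^α ≤ (4:ℝ)^(1:ℝ) :=
            Real.rpow_le_rpow_of_exponent_le (by norm_num) hαlt1.le
        _ = 4 := Real.rpow_one 4
    have e6 : x^(-α) ≤ max 1 T * x^(-αmax) := by
      have f1 : x^(-α) = x^(-αmax) * x^(αmax - α) := by
        rw [← Real.rpow_add hx0]; ring_nf
      have f2 : x^(αmax - α) ≤ (max 1 T)^(αmax - α) :=
        Real.rpow_le_rpow hx0.le (le_trans hiT (le_max_right 1 T)) (by linarith)
      have f3 : (max 1 T)^(αmax - α) ≤ max 1 T := by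
        calc (max 1 T)^(αmax - α) ≤ (max 1 T)^(1:ℝ) :=
              Real.rpow_le_rpow_of_exponent_le (le_max_left 1 T) (by linarith)
          _ = max 1 T := Real.rpow_one _
      have f4 : (0:ℝ) < x^(-αmax) := by positivity
      calc x^(-α) = x^(-αmax) * x^(αmax-α) := f1
        _ ≤ x^(-αmax) * (max 1 T) :=
            mul_le_mul_of_nonneg_left (le_trans f2 f3) f4.le
        _ = max 1 T * x^(-αmax) := by ring
    have h40 : (0:ℝ) < (4:ℝ)^α := by positivity
    have hxa0 : (0:ℝ) < x^(-α) := by positivity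
    calc K ≤ (x/4)^(-α) := e3
      _ = x^(-α) * 4^α := e4
      _ ≤ (max 1 T * x^(-αmax)) * 4 := by nlinarith
      _ = 4 * (max 1 T * x^(-αmax)) := by ring
  have hΔF : |Fnode τ ((i:ℝ)+σ+1) α - 2*Fnode τ ((i:ℝ)+σ) α + Fnode τ ((i:ℝ)+σ-1) α|
      ≤ 2*(2*K) := by
    rw [hKdef]
    apply sdiff_bound (f := fun v => Fnode τ v α) (f' := fun v => F1 τ α v)
      (f'' := fun v => F2 τ α v) (c := (i:ℝ)+σ)
    · intro v hv; exact hasDerivAt_Fnode_v (lt_of_lt_of_le hsm hv.1) hαlt2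
    · intro v hv; exact hasDerivAt_F1_v (lt_of_lt_of_le hsm hv.1)
    · intro v hv; exact bound_F2 hτ0 hw12 hv.1 hαpos hαlt1
  have hΔF1 : |F1 τ α ((i:ℝ)+σ+1) - 2*F1 τ α ((i:ℝ)+σ) + F1 τ α ((i:ℝ)+σ-1)|
      ≤ 2*(2*K) := by
    rw [hKdef]
    apply sdiff_bound (f := fun v => F1 τ α v) (f' := fun v => F2 τ α v)
      (f'' := fun v => F3 τ α v) (c := (i:ℝ)+σ)
    · intro v hv; exact hasDerivAt_F1_v (lt_of_lt_of_le hsm hv.1)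
    · intro v hv; exact hasDerivAt_F2_v (lt_of_lt_of_le hsm hv.1)
    · intro v hv; exact bound_F3 hτ0 hw12 hv.1 hαpos hαlt1
  have hΔG : |Gnode τ ((i:ℝ)+σ+1) α - 2*Gnode τ ((i:ℝ)+σ) α + Gnode τ ((i:ℝ)+σ-1) α|
      ≤ 2*((3 + 2*(|Real.log x| + 3))*K) := by
    rw [hKdef]
    apply sdiff_bound (f := fun v => Gnode τ v α) (f' := fun v => G1 τ α v)
      (f'' := fun v => G2 τ α v) (c := (i:ℝ)+σ)
    · intro v hv; exact hasDerivAt_Gnode_v hτ0 (lt_of_lt_of_le hsm hv.1) hαlt2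
    · intro v hv; exact hasDerivAt_G1_v hτ0 (lt_of_lt_of_le hsm hv.1)
    · intro v hv; exact bound_G2 hτ0 hw12 hv.1 hαpos hαlt1 (hΛ v hv)
  have hDα : HasDerivAt (fun a => ai a σ τ i)
      (dGinv α * (Fnode τ ((i:ℝ)+σ+1) α - 2*Fnode τ ((i:ℝ)+σ) α + Fnode τ ((i:ℝ)+σ-1) α)
        + (Real.Gamma (2-α))⁻¹ *
          (Gnode τ ((i:ℝ)+σ+1) α - 2*Gnode τ ((i:ℝ)+σ) α + Gnode τ ((i:ℝ)+σ-1) α)) α := by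
    have hfe : (fun a => ai a σ τ i) = (fun a : ℝ => (Real.Gamma (2-a))⁻¹ *
        (Fnode τ ((i:ℝ)+σ+1) a - 2*Fnode τ ((i:ℝ)+σ) a + Fnode τ ((i:ℝ)+σ-1) a)) := by
      funext a; simp only [ai, Fnode]; rw [div_eq_mul_inv]; ring
    rw [hfe]
    exact (hasDerivAt_Ginv α).mul
      (((hasDerivAt_Fnode_a hτ0 hsp hαlt2).sub
        ((hasDerivAt_Fnode_a hτ0 hs0 hαlt2).const_mul 2)).add
        (hasDerivAt_Fnode_a hτ0 hsm hαlt2))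
  have hDσ : HasDerivAt (fun s => ai α s τ i)
      ((Real.Gamma (2-α))⁻¹ *
        (F1 τ α ((i:ℝ)+σ+1) - 2*F1 τ α ((i:ℝ)+σ) + F1 τ α ((i:ℝ)+σ-1))) σ := by
    have hfe : (fun s : ℝ => ai α s τ i) = (fun s : ℝ => (Real.Gamma (2-α))⁻¹ *
        (Fnode τ ((i:ℝ)+s+1) α - 2*Fnode τ ((i:ℝ)+s) α + Fnode τ ((i:ℝ)+s-1) α)) := by
      funext s; simp only [ai, Fnode]; rw [div_eq_mul_inv]; ring
    rw [hfe]
    have i1 : HasDerivAt (fun s : ℝ => (i:ℝ)+s+1) 1 σ := by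
      simpa using (((hasDerivAt_id σ).const_add ((i:ℝ))).add_const (1:ℝ))
    have i0 : HasDerivAt (fun s : ℝ => (i:ℝ)+s) 1 σ := by
      simpa using ((hasDerivAt_id σ).const_add ((i:ℝ)))
    have im : HasDerivAt (fun s : ℝ => (i:ℝ)+s-1) 1 σ := by
      simpa using (((hasDerivAt_id σ).const_add ((i:ℝ))).sub_const (1:ℝ))
    have c1 : HasDerivAt (fun s : ℝ => Fnode τ ((i:ℝ)+s+1) α) (F1 τ α ((i:ℝ)+σ+1)) σ := by
      have := (hasDerivAt_Fnode_v (τ := τ) (v := (i:ℝ)+σ+1) hsp hαlt2).comp σ i1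
      exact this.congr_deriv (mul_one _)
    have c0 : HasDerivAt (fun s : ℝ => Fnode τ ((i:ℝ)+s) α) (F1 τ α ((i:ℝ)+σ)) σ := by
      have := (hasDerivAt_Fnode_v (τ := τ) (v := (i:ℝ)+σ) hs0 hαlt2).comp σ i0
      exact this.congr_deriv (mul_one _)
    have cm : HasDerivAt (fun s : ℝ => Fnode τ ((i:ℝ)+s-1) α) (F1 τ α ((i:ℝ)+σ-1)) σ := by
      have := (hasDerivAt_Fnode_v (τ := τ) (v := (i:ℝ)+σ-1) hsm hαlt2).comp σ im
      exact this.congr_deriv (mul_one _)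
    exact ((c1.sub (c0.const_mul 2)).add cm).const_mul _
  obtain ⟨hGa, hdGa⟩ := hGB α hα
  have hGa0 : (0:ℝ) < (Real.Gamma (2-α))⁻¹ := by
    have := Real.Gamma_pos_of_pos (show (0:ℝ) < 2-α by linarith)
    positivity
  rw [hDα.deriv, hDσ.deriv]
  set LX := |Real.log x| with hLXdef
  have hLX0 : 0 ≤ LX := by rw [hLXdef]; exact abs_nonneg _
  set E1 := dGinv α *
      (Fnode τ ((i:ℝ)+σ+1) α - 2*Fnode τ ((i:ℝ)+σ) α + Fnode τ ((i:ℝ)+σ-1) α) with hE1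
  set E2 := (Real.Gamma (2-α))⁻¹ *
      (Gnode τ ((i:ℝ)+σ+1) α - 2*Gnode τ ((i:ℝ)+σ) α + Gnode τ ((i:ℝ)+σ-1) α) with hE2
  set E3 := (Real.Gamma (2-α))⁻¹ *
      (F1 τ α ((i:ℝ)+σ+1) - 2*F1 τ α ((i:ℝ)+σ) + F1 τ α ((i:ℝ)+σ-1)) with hE3
  have p1 : |E1| ≤ B * (2*(2*K)) := by
    rw [hE1, abs_mul]
    exact mul_le_mul hdGa hΔF (abs_nonneg _) hBpos.le
  have p2 : |E2| ≤ B * (2*((3 + 2*(LX + 3))*K)) := by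
    rw [hE2, abs_mul, abs_of_pos hGa0]
    exact mul_le_mul hGa hΔG (abs_nonneg _) hBpos.le
  have p3 : |E3| ≤ B * (2*(2*K)) := by
    rw [hE3, abs_mul, abs_of_pos hGa0]
    exact mul_le_mul hGa hΔF1 (abs_nonneg _) hBpos.le
  have pa : |E1 + E2| ≤ |E1| + |E2| := abs_add_le _ _
  have hBK0 : 0 ≤ B*K := mul_nonneg hBpos.le hK0.le
  have hstep : |E1 + E2| + |E3| ≤ 26*(1+LX)*(B*K) := by
    nlinarith [mul_nonneg hBK0 hLX0]
  calc |E1 + E2| + |E3| ≤ 26*(1+LX)*(B*K) := hstep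
    _ ≤ 26*(1+LX)*(B*(4*(max 1 T * x^(-αmax)))) := by
        apply mul_le_mul_of_nonneg_left (mul_le_mul_of_nonneg_left hKb hBpos.le)
        nlinarith
    _ = 104 * B * max 1 T * (1 + LX) * x^(-αmax) := by ring
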